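/- In the single-individual setting with strict preferences, let x_n = x(P) be the most-preferred improved outcome at P ≠ P̄. Then either x_n ≠ x_1 and x_n is the P-top outcome, or there exists an index m < n − 1 such that P ranks x_1, x_2, …, x_m in that order at the top followed immediately by x_n. -/
import Mathlib


/-- A strict linear order (strict total order) on `X`. -/
def SLO {X : Type} (P : X → X → Prop) : Prop :=
  (∀ x y : X, x ≠ y → P x y ∨ P y x) ∧ Transitive P ∧ Irreflexive P

/-- The reference ranking `P̄`: `x_1 P̄ x_2 P̄ … P̄ x_N` (0-indexed: smaller index preferred). -/
def Pbar {N : ℕ} : Fin N → Fin N → Prop := fun a b => a < b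

/-- The rank of `x` under `P`: the number of outcomes strictly preferred to `x`. -/
noncomputable def rankOf {N : ℕ} (P : Fin N → Fin N → Prop) (x : Fin N) : ℕ :=
  Nat.card {y : Fin N // P y x}

/-- `x` strictly improves its rank under `P` relative to `P̄`. -/
def improves {N : ℕ} (P : Fin N → Fin N → Prop) (x : Fin N) : Prop :=
  rankOf P x < rankOf (Pbar (N := N)) x

/-- `z` is `x(P)`: the `P`-most-preferred outcome among those whose rank improved. -/
def topImproved {N : ℕ} (P : Fin N → Fin N → Prop) (z : Fin N) : Prop :=
  improves P z ∧ ∀ w : Fin N, improves P w → ¬ P w z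

lemma rank_eq_ncard {N : ℕ} (P : Fin N → Fin N → Prop) (x : Fin N) :
    rankOf P x = Set.ncard {y | P y x} := by
  rw [rankOf, ← Nat.card_coe_set_eq]
  rfl

lemma rank_Pbar {N : ℕ} (x : Fin N) : rankOf (Pbar (N := N)) x = x.val := by
  rw [rank_eq_ncard]
  have : {y : Fin N | Pbar y x} = Set.Iio x := rfl
  rw [this, Set.ncard_eq_toFinset_card']
  simp [Set.toFinset_Iio, Fin.card_Iio]

lemma rank_lt_of {N : ℕ} {P : Fin N → Fin N → Prop} (hP : SLO P) {a b : Fin N}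
    (hab : P a b) : rankOf P a < rankOf P b := by
  rw [rank_eq_ncard, rank_eq_ncard]
  apply Set.ncard_lt_ncard
  · constructor
    · intro y hy; exact hP.2.1 hy hab
    · intro hsub
      exact hP.2.2 a (hsub hab)
  · exact Set.toFinite _

lemma rank_lt_N {N : ℕ} {P : Fin N → Fin N → Prop} (hP : SLO P) (x : Fin N) :
    rankOf P x < N := by
  rw [rank_eq_ncard]
  have h := Set.ncard_lt_ncard (s := {y | P y x}) (t := Set.univ)
    ⟨Set.subset_univ _, fun hsub => hP.2.2 x (hsub (Set.mem_univ x))⟩ (Set.finite_univ)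
  have : (Set.univ : Set (Fin N)).ncard = N := by
    rw [Set.ncard_univ]; simp
  omega

lemma lt_of_rank_lt {N : ℕ} {P : Fin N → Fin N → Prop} (hP : SLO P) {a b : Fin N}
    (h : rankOf P a < rankOf P b) : P a b := by
  rcases eq_or_ne a b with rfl | hne
  · omega
  rcases hP.1 a b hne with h1 | h1
  · exact h1
  · exact absurd (rank_lt_of hP h1) (by omega)

lemma rank_surj {N : ℕ} {P : Fin N → Fin N → Prop} (hP : SLO P) (k : ℕ) (hk : k < N) :
    ∃ w : Fin N, rankOf P w = k := by
  have hinj : Function.Injective (fun x : Fin N => (⟨rankOf P x, rank_lt_N hP x⟩ : Fin N)) := by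
    intro a b hab
    simp only [Fin.mk.injEq] at hab
    by_contra hne
    rcases hP.1 a b hne with h | h
    · exact absurd (rank_lt_of hP h) (by omega)
    · exact absurd (rank_lt_of hP h) (by omega)
  have hsurj := Finite.surjective_of_injective hinj
  obtain ⟨w, hw⟩ := hsurj ⟨k, hk⟩
  exact ⟨w, by simpa [Fin.ext_iff] using hw⟩

/-- the most-preferred improved outcome `x_n = x(P)` is either the
`P`-top outcome (and not `x_1`), or preceded exactly by `x_1, …, x_m` for some
index `m < n − 1` (1-indexed; here `1 ≤ m` and `m < z.val` 0-indexed). -/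
theorem stmt8 {N : ℕ} (P : Fin N → Fin N → Prop) (hP : SLO P) (hne : P ≠ Pbar)
    (z : Fin N) (hz : topImproved P z) :
    (z ≠ (⟨0, z.pos⟩ : Fin N) ∧ ∀ y : Fin N, y ≠ z → P z y) ∨
    (∃ m : ℕ, 1 ≤ m ∧ m < (z : ℕ) ∧
      (∀ j : Fin N, (j : ℕ) < m → rankOf P j = (j : ℕ)) ∧ rankOf P z = m) := by
  obtain ⟨himp, hmax⟩ := hz
  have hrz : rankOf P z < z.val := by
    have h := himp; rw [improves, rank_Pbar] at h; exact h
  have key : ∀ j, j < rankOf P z → ∀ (hjN : j < N), rankOf P ⟨j, hjN⟩ = j := by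
    intro j
    induction j using Nat.strong_induction_on with
    | _ j IH =>
      intro hjr hjN
      obtain ⟨w, hw⟩ := rank_surj hP j hjN
      have hwz : P w z := lt_of_rank_lt hP (by omega)
      have hnimp : ¬ improves P w := fun h => hmax w h hwz
      rw [improves, rank_Pbar, not_lt, hw] at hnimp
      have hwv : w.val = j := by
        by_contra hv
        have h2 := IH w.val (by omega) (by omega) w.isLt
        rw [show (⟨w.val, w.isLt⟩ : Fin N) = w from rfl, hw] at h2
        omega
      rw [show (⟨j, hjN⟩ : Fin N) = w from Fin.ext hwv.symm, hw]
  rcases Nat.eq_zero_or_pos (rankOf P z) with h0 | h1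
  · left
    constructor
    · intro hzeq
      rw [Fin.ext_iff] at hzeq
      simp only [Fin.val_mk] at hzeq
      omega
    · intro y hy
      rcases hP.1 z y (fun h => hy h.symm) with h | h
      · exact h
      · exact absurd (rank_lt_of hP h) (by omega)
  · right
    refine ⟨rankOf P z, h1, hrz, ?_, rfl⟩
    intro j hj
    have := key j.val hj j.isLt
    rwa [show (⟨j.val, j.isLt⟩ : Fin N) = j from rfl] at this
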